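/- Let v_1, ..., v_{d(d+1)/2} be unit vectors in ℝ^d that are equiangular with common angle β < 1, and suppose the rank-one projections v_i v_iᵀ span the symmetric subspace S_d of M_d(ℂ). Then the vectors form a tight frame with frame constant (d+1)/2, i.e. Σ_{i=1}^{d(d+1)/2} v_i v_iᵀ = ((d+1)/2)·I_d. -/

import Mathlib

open Matrix

lemma vmv_mul_vmv {d : ℕ} (a b c e : Fin d → ℝ) :
    vecMulVec a b * vecMulVec c e = (b ⬝ᵥ c) • vecMulVec a e := by
  ext x y
  simp only [mul_apply, vecMulVec_apply, Matrix.smul_apply, smul_eq_mul, dotProduct, Finset.sum_mul]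
  exact Finset.sum_congr rfl fun z _ => by ring

lemma trace_vmv {d : ℕ} (a b : Fin d → ℝ) : trace (vecMulVec a b) = a ⬝ᵥ b := by
  simp [trace, diag, vecMulVec_apply, dotProduct]

lemma trace_map_ofReal {d : ℕ} (A : Matrix (Fin d) (Fin d) ℝ) :
    trace (A.map Complex.ofReal) = Complex.ofReal (trace A) := by
  simp [trace, diag, Matrix.map_apply]

lemma map_ofReal_mul {d : ℕ} (A B : Matrix (Fin d) (Fin d) ℝ) :
    (A.map Complex.ofReal) * (B.map Complex.ofReal) = (A * B).map Complex.ofReal := by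
  ext x y
  simp [mul_apply, Matrix.map_apply]

lemma map_sum_ofReal {d k : ℕ} (f : Fin k → Matrix (Fin d) (Fin d) ℝ) :
    (∑ i, f i).map Complex.ofReal = ∑ i, (f i).map Complex.ofReal := by
  ext x y
  simp [Matrix.map_apply, Matrix.sum_apply]


/-- The symmetric subspace `S_d` of `M_d(ℂ)`: matrices `A` with `Aᵀ = A`. -/
noncomputable def symMatrices (d : ℕ) : Submodule ℂ (Matrix (Fin d) (Fin d) ℂ) where
  carrier := {A : Matrix (Fin d) (Fin d) ℂ | Aᵀ = A}
  add_mem' := by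
    intro a b ha hb
    simp only [Set.mem_setOf_eq, Matrix.transpose_add] at *
    rw [ha, hb]
  zero_mem' := by simp
  smul_mem' := by
    intro c A hA
    simp only [Set.mem_setOf_eq, Matrix.transpose_smul] at *
    rw [hA]

/-- A maximal set of d(d+1)/2 real equiangular lines forms a tight frame:
Σ v_i v_iᵀ = ((d+1)/2) · I_d. -/
theorem maximal_equiangular_lines_tight_frame
    {d : ℕ} (v : Fin (d * (d + 1) / 2) → (Fin d → ℝ)) (β : ℝ)
    (hunit : ∀ i, v i ⬝ᵥ v i = 1)
    (hang : ∀ i j, i ≠ j → |v i ⬝ᵥ v j| = β)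
    (hβ : β < 1)
    (hspan : Submodule.span ℂ
        (Set.range fun i => (Matrix.vecMulVec (v i) (v i)).map Complex.ofReal)
        = symMatrices d) :
    ∑ i, Matrix.vecMulVec (v i) (v i)
      = (((d : ℝ) + 1) / 2) • (1 : Matrix (Fin d) (Fin d) ℝ) := by
  rcases Nat.lt_or_ge d 2 with hd | hd
  · interval_cases d
    · ext x y; exact x.elim0
    · have h0 := hunit 0
      simp only [dotProduct, Fin.sum_univ_one] at h0
      ext x y
      fin_cases x <;> fin_cases y <;>
        simp [Fin.sum_univ_one, vecMulVec_apply, one_apply, h0]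
  -- main case: d ≥ 2
  have hk3 : 3 ≤ d * (d + 1) / 2 := by
    have : 2 * (2 + 1) / 2 ≤ d * (d + 1) / 2 :=
      Nat.div_le_div_right (Nat.mul_le_mul hd (by omega))
    omega
  have hβ0 : 0 ≤ β := by
    have h := hang ⟨0, by omega⟩ ⟨1, by omega⟩ (by simp [Fin.ext_iff])
    rw [← h]; exact abs_nonneg _
  have hβ2 : (1 : ℝ) - β ^ 2 ≠ 0 := by nlinarith
  have hβ2' : (1 : ℂ) - (β : ℂ) ^ 2 ≠ 0 := by
    have h' : ((1 - β ^ 2 : ℝ) : ℂ) ≠ 0 := by exact_mod_cast hβ2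
    convert h' using 1
    push_cast; ring
  -- extract coefficients of the identity matrix
  have hone : (1 : Matrix (Fin d) (Fin d) ℂ) ∈ symMatrices d := Matrix.transpose_one
  rw [← hspan, Submodule.mem_span_range_iff_exists_fun] at hone
  obtain ⟨c, hc⟩ := hone
  -- Gram entries
  have gram : ∀ j i, (((vecMulVec (v j) (v j)).map Complex.ofReal) *
        ((vecMulVec (v i) (v i)).map Complex.ofReal)).trace
      = (((v j ⬝ᵥ v i) ^ 2 : ℝ) : ℂ) := by
    intro j i
    rw [map_ofReal_mul, trace_map_ofReal, vmv_mul_vmv, trace_smul, trace_vmv, smul_eq_mul]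
    push_cast
    ring
  -- trace of hc gives sum of coefficients
  have hS : ∑ i, c i = (d : ℂ) := by
    have h := congrArg Matrix.trace hc
    simp only [trace_sum, trace_smul, smul_eq_mul, trace_one] at h
    have htr : ∀ i, ((vecMulVec (v i) (v i)).map Complex.ofReal).trace = 1 := by
      intro i
      rw [trace_map_ofReal, trace_vmv, hunit i, Complex.ofReal_one]
    simp only [htr, mul_one] at h
    simpa using h
  -- equations from pairing with each P j
  have E : ∀ j, c j * (1 - (β : ℂ) ^ 2) + (β : ℂ) ^ 2 * (d : ℂ) = 1 := by
    intro j
    have h := congrArg (fun M : Matrix (Fin d) (Fin d) ℂ =>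
      (((vecMulVec (v j) (v j)).map Complex.ofReal) * M).trace) hc
    simp only [Matrix.mul_sum, Matrix.mul_smul, trace_sum, trace_smul, smul_eq_mul,
      Matrix.mul_one] at h
    simp only [gram j] at h
    rw [trace_map_ofReal, trace_vmv, hunit j, Complex.ofReal_one] at h
    have hterm : ∀ i, c i * (((v j ⬝ᵥ v i) ^ 2 : ℝ) : ℂ)
        = (if i = j then c j * (1 - (β : ℂ) ^ 2) else 0) + (β : ℂ) ^ 2 * c i := by
      intro i
      by_cases hij : i = j
      · subst hij
        rw [hunit i]
        simp only [if_pos rfl]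
        push_cast
        ring
      · rw [← sq_abs (v j ⬝ᵥ v i), hang j i (fun h' => hij h'.symm)]
        simp only [if_neg hij]
        push_cast
        ring
    rw [Finset.sum_congr rfl (fun i _ => hterm i), Finset.sum_add_distrib,
      Finset.sum_ite_eq' Finset.univ j _, ← Finset.mul_sum, hS] at h
    simpa using h
  -- all coefficients equal
  have hccon : ∀ j, c j = c ⟨0, by omega⟩ := by
    intro j
    have h1 := E j
    have h2 := E ⟨0, by omega⟩
    have h3 : c j * (1 - (β : ℂ) ^ 2) = c ⟨0, by omega⟩ * (1 - (β : ℂ) ^ 2) := by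
      linear_combination h1 - h2
    exact mul_right_cancel₀ hβ2' h3
  have hSc : ((d * (d + 1) / 2 : ℕ) : ℂ) * c ⟨0, by omega⟩ = (d : ℂ) := by
    rw [← hS, Finset.sum_congr rfl (fun i _ => hccon i)]
    simp [Finset.card_univ, mul_comm]
  have hd0 : (d : ℂ) ≠ 0 := Nat.cast_ne_zero.mpr (by omega)
  have hk0 : ((d * (d + 1) / 2 : ℕ) : ℂ) ≠ 0 := Nat.cast_ne_zero.mpr (by omega)
  have hc00 : c ⟨0, by omega⟩ ≠ 0 := by
    intro h; rw [h, mul_zero] at hSc; exact hd0 hSc.symm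
  -- complex tight frame equation
  have hcomplex : (∑ i, vecMulVec (v i) (v i)).map Complex.ofReal
      = (((d * (d + 1) / 2 : ℕ) : ℂ) / (d : ℂ)) • (1 : Matrix (Fin d) (Fin d) ℂ) := by
    rw [map_sum_ofReal]
    have h : c ⟨0, by omega⟩ • ∑ i, (vecMulVec (v i) (v i)).map Complex.ofReal = 1 := by
      rw [Finset.smul_sum, ← hc]
      exact Finset.sum_congr rfl fun i _ => by rw [hccon i]
    have hc0inv : (c ⟨0, by omega⟩)⁻¹ = ((d * (d + 1) / 2 : ℕ) : ℂ) / (d : ℂ) := by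
      field_simp
      linear_combination -hSc
    rw [← hc0inv]
    calc (∑ i, (vecMulVec (v i) (v i)).map Complex.ofReal)
        = (c ⟨0, by omega⟩)⁻¹ • (c ⟨0, by omega⟩ •
            ∑ i, (vecMulVec (v i) (v i)).map Complex.ofReal) := by
          rw [smul_smul, inv_mul_cancel₀ hc00, one_smul]
      _ = (c ⟨0, by omega⟩)⁻¹ • (1 : Matrix (Fin d) (Fin d) ℂ) := by rw [h]
  -- translate back to ℝ
  have hkd : ((d * (d + 1) / 2 : ℕ) : ℝ) * 2 = (d : ℝ) * ((d : ℝ) + 1) := by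
    have h2 : 2 ∣ d * (d + 1) := (Nat.even_mul_succ_self d).two_dvd
    have := Nat.div_mul_cancel h2
    exact_mod_cast this
  have hdR : (d : ℝ) ≠ 0 := Nat.cast_ne_zero.mpr (by omega)
  have hfrac : (((d * (d + 1) / 2 : ℕ) : ℂ) / (d : ℂ)) = ((((d : ℝ) + 1) / 2 : ℝ) : ℂ) := by
    have hkd' : ((d * (d + 1) / 2 : ℕ) : ℂ) * 2 = (d : ℂ) * ((d : ℂ) + 1) := by
      exact_mod_cast hkd
    push_cast
    field_simp
    linear_combination hkd'
  rw [hfrac] at hcomplex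
  apply Matrix.map_injective Complex.ofReal_injective (f := Complex.ofReal)
  show (∑ i, vecMulVec (v i) (v i)).map Complex.ofReal
      = ((((d : ℝ) + 1) / 2) • (1 : Matrix (Fin d) (Fin d) ℝ)).map Complex.ofReal
  rw [hcomplex]
  ext x y
  simp [Matrix.map_apply, Matrix.smul_apply, Matrix.one_apply, apply_ite Complex.ofReal]
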